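/- The space of regulated functions with the sup-of-one-sided-limits norm is a Banach algebra: with ‖g‖ = sup_{t∈I} max{|g(t+)|, |g(t−)|}, the set of (equivalence classes of) regulated functions on I forms a complete normed algebra satisfying ‖fg‖ ≤ ‖f‖·‖g‖. -/

import Mathlib

open Filter Set Topology

/-- A function is regulated on `(a,b)`: bounded with one-sided limits at every
interior point and at the endpoints. -/
def Regulated (a b : ℝ) (g : ℝ → ℝ) : Prop :=
  (∃ C, ∀ t ∈ Set.Ioo a b, |g t| ≤ C) ∧
  (∀ t ∈ Set.Ico a b, ∃ L : ℝ, Tendsto g (𝓝[Set.Ioo t b] t) (𝓝 L)) ∧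
  (∀ t ∈ Set.Ioc a b, ∃ L : ℝ, Tendsto g (𝓝[Set.Ioo a t] t) (𝓝 L))

/-- The norm `‖g‖ = sup_{t ∈ (a,b)} max {|g(t+)|, |g(t-)|}` on regulated functions
(one-sided limits of equivalent regulated functions agree, so this is a norm on
equivalence classes). -/
noncomputable def regNorm (a b : ℝ) (g : ℝ → ℝ) : ℝ :=
  ⨆ t ∈ Set.Ioo a b,
    max |limUnder (𝓝[Set.Ioo t b] t) g| |limUnder (𝓝[Set.Ioo a t] t) g|

namespace RegAux

variable {a b t : ℝ} {g f : ℝ → ℝ}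

lemma neBotR (h : t < b) : (𝓝[Set.Ioo t b] t).NeBot :=
  mem_closure_iff_nhdsWithin_neBot.mp (by rw [closure_Ioo h.ne]; exact ⟨le_refl t, h.le⟩)

lemma neBotL (h : a < t) : (𝓝[Set.Ioo a t] t).NeBot :=
  mem_closure_iff_nhdsWithin_neBot.mp (by rw [closure_Ioo h.ne]; exact ⟨h.le, le_refl t⟩)

lemma tendsto_rl (hg : Regulated a b g) (ht : t ∈ Set.Ico a b) :
    Tendsto g (𝓝[Set.Ioo t b] t) (𝓝 (limUnder (𝓝[Set.Ioo t b] t) g)) := by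
  haveI := neBotR ht.2
  obtain ⟨L, hL⟩ := hg.2.1 t ht
  rwa [hL.limUnder_eq]

lemma tendsto_ll (hg : Regulated a b g) (ht : t ∈ Set.Ioc a b) :
    Tendsto g (𝓝[Set.Ioo a t] t) (𝓝 (limUnder (𝓝[Set.Ioo a t] t) g)) := by
  haveI := neBotL ht.1
  obtain ⟨L, hL⟩ := hg.2.2 t ht
  rwa [hL.limUnder_eq]

lemma abs_rl_le {C : ℝ} (hg : Regulated a b g) (hC : ∀ s ∈ Set.Ioo a b, |g s| ≤ C)
    (ht : t ∈ Set.Ico a b) : |limUnder (𝓝[Set.Ioo t b] t) g| ≤ C := by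
  haveI := neBotR ht.2
  refine le_of_tendsto (tendsto_rl hg ht).abs ?_
  filter_upwards [eventually_mem_nhdsWithin] with x hx
  exact hC x ⟨lt_of_le_of_lt ht.1 hx.1, hx.2⟩

lemma abs_ll_le {C : ℝ} (hg : Regulated a b g) (hC : ∀ s ∈ Set.Ioo a b, |g s| ≤ C)
    (ht : t ∈ Set.Ioc a b) : |limUnder (𝓝[Set.Ioo a t] t) g| ≤ C := by
  haveI := neBotL ht.1
  refine le_of_tendsto (tendsto_ll hg ht).abs ?_
  filter_upwards [eventually_mem_nhdsWithin] with x hx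
  exact hC x ⟨hx.1, lt_of_lt_of_le hx.2 ht.2⟩

lemma regNorm_nonneg (a b : ℝ) (g : ℝ → ℝ) : 0 ≤ regNorm a b g :=
  Real.iSup_nonneg fun _ => Real.iSup_nonneg fun _ =>
    (abs_nonneg _).trans (le_max_left _ _)

lemma regNorm_le {C : ℝ} (hC : 0 ≤ C)
    (h : ∀ t ∈ Set.Ioo a b,
      max |limUnder (𝓝[Set.Ioo t b] t) g| |limUnder (𝓝[Set.Ioo a t] t) g| ≤ C) :
    regNorm a b g ≤ C :=
  Real.iSup_le (fun t => Real.iSup_le (fun ht => h t ht) hC) hC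

lemma le_regNorm (hg : Regulated a b g) (ht : t ∈ Set.Ioo a b) :
    max |limUnder (𝓝[Set.Ioo t b] t) g| |limUnder (𝓝[Set.Ioo a t] t) g| ≤ regNorm a b g := by
  obtain ⟨C, hC⟩ := hg.1
  have hb : BddAbove (Set.range fun s => ⨆ _ : s ∈ Set.Ioo a b,
      max |limUnder (𝓝[Set.Ioo s b] s) g| |limUnder (𝓝[Set.Ioo a s] s) g|) := by
    refine ⟨max C 0, ?_⟩
    rintro x ⟨s, rfl⟩
    show (⨆ _ : s ∈ Set.Ioo a b,
        max |limUnder (𝓝[Set.Ioo s b] s) g| |limUnder (𝓝[Set.Ioo a s] s) g|) ≤ max C 0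
    by_cases hs : s ∈ Set.Ioo a b
    · have e : (⨆ _ : s ∈ Set.Ioo a b,
          max |limUnder (𝓝[Set.Ioo s b] s) g| |limUnder (𝓝[Set.Ioo a s] s) g|)
          = max |limUnder (𝓝[Set.Ioo s b] s) g| |limUnder (𝓝[Set.Ioo a s] s) g| :=
        ciSup_pos hs
      rw [e]
      exact le_max_of_le_left
        (max_le (abs_rl_le hg hC ⟨hs.1.le, hs.2⟩) (abs_ll_le hg hC ⟨hs.1, hs.2.le⟩))
    · haveI : IsEmpty (s ∈ Set.Ioo a b) := ⟨hs⟩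
      rw [Real.iSup_of_isEmpty]
      exact le_max_right _ _
  have e : (⨆ _ : t ∈ Set.Ioo a b,
      max |limUnder (𝓝[Set.Ioo t b] t) g| |limUnder (𝓝[Set.Ioo a t] t) g|)
      = max |limUnder (𝓝[Set.Ioo t b] t) g| |limUnder (𝓝[Set.Ioo a t] t) g| :=
    ciSup_pos ht
  rw [← e]
  exact le_ciSup hb t

lemma reg_add (hf : Regulated a b f) (hg : Regulated a b g) : Regulated a b (f + g) := by
  obtain ⟨C, hC⟩ := hf.1
  obtain ⟨D, hD⟩ := hg.1
  refine ⟨⟨C + D, fun s hs => ?_⟩, fun s hs => ?_, fun s hs => ?_⟩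
  · exact (abs_add_le _ _).trans (add_le_add (hC s hs) (hD s hs))
  · obtain ⟨L, hL⟩ := hf.2.1 s hs
    obtain ⟨M, hM⟩ := hg.2.1 s hs
    exact ⟨L + M, hL.add hM⟩
  · obtain ⟨L, hL⟩ := hf.2.2 s hs
    obtain ⟨M, hM⟩ := hg.2.2 s hs
    exact ⟨L + M, hL.add hM⟩

lemma reg_sub (hf : Regulated a b f) (hg : Regulated a b g) : Regulated a b (f - g) := by
  obtain ⟨C, hC⟩ := hf.1
  obtain ⟨D, hD⟩ := hg.1
  refine ⟨⟨C + D, fun s hs => ?_⟩, fun s hs => ?_, fun s hs => ?_⟩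
  · exact (abs_sub _ _).trans (add_le_add (hC s hs) (hD s hs))
  · obtain ⟨L, hL⟩ := hf.2.1 s hs
    obtain ⟨M, hM⟩ := hg.2.1 s hs
    exact ⟨L - M, hL.sub hM⟩
  · obtain ⟨L, hL⟩ := hf.2.2 s hs
    obtain ⟨M, hM⟩ := hg.2.2 s hs
    exact ⟨L - M, hL.sub hM⟩

lemma reg_mul (hf : Regulated a b f) (hg : Regulated a b g) : Regulated a b (f * g) := by
  obtain ⟨C, hC⟩ := hf.1
  obtain ⟨D, hD⟩ := hg.1
  refine ⟨⟨max C 0 * max D 0, fun s hs => ?_⟩, fun s hs => ?_, fun s hs => ?_⟩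
  · have : |(f * g) s| = |f s| * |g s| := abs_mul _ _
    rw [this]
    exact mul_le_mul ((hC s hs).trans (le_max_left _ _)) ((hD s hs).trans (le_max_left _ _))
      (abs_nonneg _) (le_max_right _ _)
  · obtain ⟨L, hL⟩ := hf.2.1 s hs
    obtain ⟨M, hM⟩ := hg.2.1 s hs
    exact ⟨L * M, hL.mul hM⟩
  · obtain ⟨L, hL⟩ := hf.2.2 s hs
    obtain ⟨M, hM⟩ := hg.2.2 s hs
    exact ⟨L * M, hL.mul hM⟩

lemma rl_mul (hf : Regulated a b f) (hg : Regulated a b g) (ht : t ∈ Set.Ico a b) :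
    limUnder (𝓝[Set.Ioo t b] t) (f * g)
      = limUnder (𝓝[Set.Ioo t b] t) f * limUnder (𝓝[Set.Ioo t b] t) g := by
  haveI := neBotR ht.2
  exact ((tendsto_rl hf ht).mul (tendsto_rl hg ht)).limUnder_eq

lemma ll_mul (hf : Regulated a b f) (hg : Regulated a b g) (ht : t ∈ Set.Ioc a b) :
    limUnder (𝓝[Set.Ioo a t] t) (f * g)
      = limUnder (𝓝[Set.Ioo a t] t) f * limUnder (𝓝[Set.Ioo a t] t) g := by
  haveI := neBotL ht.1
  exact ((tendsto_ll hf ht).mul (tendsto_ll hg ht)).limUnder_eq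

lemma rl_sub (hf : Regulated a b f) (hg : Regulated a b g) (ht : t ∈ Set.Ico a b) :
    limUnder (𝓝[Set.Ioo t b] t) (f - g)
      = limUnder (𝓝[Set.Ioo t b] t) f - limUnder (𝓝[Set.Ioo t b] t) g := by
  haveI := neBotR ht.2
  exact ((tendsto_rl hf ht).sub (tendsto_rl hg ht)).limUnder_eq

lemma ll_sub (hf : Regulated a b f) (hg : Regulated a b g) (ht : t ∈ Set.Ioc a b) :
    limUnder (𝓝[Set.Ioo a t] t) (f - g)
      = limUnder (𝓝[Set.Ioo a t] t) f - limUnder (𝓝[Set.Ioo a t] t) g := by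
  haveI := neBotL ht.1
  exact ((tendsto_ll hf ht).sub (tendsto_ll hg ht)).limUnder_eq

/-- The right-limit regularization of a regulated function is right-continuous:
its limit from the right at `t` is the right limit of `g` at `t`. -/
lemma tendsto_rl_rl (hg : Regulated a b g) (ht : t ∈ Set.Ico a b) :
    Tendsto (fun s => limUnder (𝓝[Set.Ioo s b] s) g) (𝓝[Set.Ioo t b] t)
      (𝓝 (limUnder (𝓝[Set.Ioo t b] t) g)) := by
  haveI := neBotR ht.2
  set L := limUnder (𝓝[Set.Ioo t b] t) g with hLdef
  rw [Metric.tendsto_nhds]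
  intro ε hε
  have hev : ∀ᶠ x in 𝓝[Set.Ioo t b] t, dist (g x) L < ε / 2 :=
    Metric.tendsto_nhds.mp (tendsto_rl hg ht) _ (by linarith)
  rw [nhdsWithin_Ioo_eq_nhdsGT ht.2] at hev ⊢
  rw [(nhdsGT_basis t).eventually_iff] at hev ⊢
  obtain ⟨u, hu, h⟩ := hev
  refine ⟨min u b, lt_min hu ht.2, fun s hs => ?_⟩
  have hsb : s < b := hs.2.trans_le (min_le_right _ _)
  have hsu : s < u := hs.2.trans_le (min_le_left _ _)
  haveI := neBotR hsb
  have hts := tendsto_rl hg (show s ∈ Set.Ico a b from ⟨ht.1.trans hs.1.le, hsb⟩)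
  have hd : dist (limUnder (𝓝[Set.Ioo s b] s) g) L ≤ ε / 2 := by
    refine le_of_tendsto (hts.dist tendsto_const_nhds) ?_
    have h2 : ∀ᶠ x in 𝓝[Set.Ioo s b] s, x < u :=
      eventually_nhdsWithin_of_eventually_nhds (eventually_lt_nhds hsu)
    filter_upwards [eventually_mem_nhdsWithin, h2] with x hx hxu
    exact (h (show x ∈ Set.Ioo t u from ⟨hs.1.trans hx.1, hxu⟩)).le
  exact lt_of_le_of_lt hd (by linarith)

/-- The right-limit regularization has limit from the left at `t` equal to the
left limit of `g` at `t`. -/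
lemma tendsto_ll_rl (hg : Regulated a b g) (ht : t ∈ Set.Ioc a b) :
    Tendsto (fun s => limUnder (𝓝[Set.Ioo s b] s) g) (𝓝[Set.Ioo a t] t)
      (𝓝 (limUnder (𝓝[Set.Ioo a t] t) g)) := by
  haveI := neBotL ht.1
  set L := limUnder (𝓝[Set.Ioo a t] t) g with hLdef
  rw [Metric.tendsto_nhds]
  intro ε hε
  have hev : ∀ᶠ x in 𝓝[Set.Ioo a t] t, dist (g x) L < ε / 2 :=
    Metric.tendsto_nhds.mp (tendsto_ll hg ht) _ (by linarith)
  rw [nhdsWithin_Ioo_eq_nhdsLT ht.1] at hev ⊢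
  rw [(nhdsLT_basis t).eventually_iff] at hev ⊢
  obtain ⟨u, hu, h⟩ := hev
  refine ⟨max u a, max_lt hu ht.1, fun s hs => ?_⟩
  have hsa : a < s := (le_max_right u a).trans_lt hs.1
  have hsu : u < s := (le_max_left u a).trans_lt hs.1
  have hsb : s < b := hs.2.trans_le ht.2
  haveI := neBotR hsb
  have hts := tendsto_rl hg (show s ∈ Set.Ico a b from ⟨hsa.le, hsb⟩)
  have hd : dist (limUnder (𝓝[Set.Ioo s b] s) g) L ≤ ε / 2 := by
    refine le_of_tendsto (hts.dist tendsto_const_nhds) ?_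
    have h2 : ∀ᶠ x in 𝓝[Set.Ioo s b] s, x < t :=
      eventually_nhdsWithin_of_eventually_nhds (eventually_lt_nhds hs.2)
    filter_upwards [eventually_mem_nhdsWithin, h2] with x hx hxt
    exact (h (show x ∈ Set.Ioo u t from ⟨hsu.trans hx.1, hxt⟩)).le
  exact lt_of_le_of_lt hd (by linarith)

lemma abs_rl_le_regNorm (hg : Regulated a b g) (ht : t ∈ Set.Ico a b) :
    |limUnder (𝓝[Set.Ioo t b] t) g| ≤ regNorm a b g := by
  rcases eq_or_lt_of_le ht.1 with h | h
  · haveI := neBotR ht.2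
    refine le_of_tendsto (tendsto_rl_rl hg ht).abs ?_
    filter_upwards [eventually_mem_nhdsWithin] with x hx
    have hx' : x ∈ Set.Ioo a b := by rw [h]; exact hx
    exact (le_max_left _ _).trans (le_regNorm hg hx')
  · exact (le_max_left _ _).trans (le_regNorm hg ⟨h, ht.2⟩)

lemma abs_ll_le_regNorm (hg : Regulated a b g) (ht : t ∈ Set.Ioc a b) :
    |limUnder (𝓝[Set.Ioo a t] t) g| ≤ regNorm a b g := by
  rcases lt_or_eq_of_le ht.2 with h | h
  · exact (le_max_right _ _).trans (le_regNorm hg ⟨ht.1, h⟩)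
  · haveI := neBotL ht.1
    refine le_of_tendsto (tendsto_ll_rl hg ht).abs ?_
    filter_upwards [eventually_mem_nhdsWithin] with x hx
    have hx' : x ∈ Set.Ioo a b := by rw [← h]; exact hx
    exact (le_max_left _ _).trans (le_regNorm hg hx')

end RegAux

open RegAux

/-- The regulated functions on `(a,b)` with the sup-of-one-sided-limits norm form a
Banach algebra: they are closed under sum and product, the norm is submultiplicative,
and every Cauchy sequence converges (in the `regNorm` pseudometric, i.e. up to
the identification of functions with the same one-sided limits). -/
theorem stmt2 (a b : ℝ) (hab : a < b) :
    (∀ f g : ℝ → ℝ, Regulated a b f → Regulated a b g →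
      Regulated a b (f + g) ∧ Regulated a b (f * g)) ∧
    (∀ f g : ℝ → ℝ, Regulated a b f → Regulated a b g →
      regNorm a b (f * g) ≤ regNorm a b f * regNorm a b g) ∧
    (∀ F : ℕ → ℝ → ℝ, (∀ k, Regulated a b (F k)) →
      (∀ ε > (0:ℝ), ∃ N, ∀ m ≥ N, ∀ n ≥ N, regNorm a b (F m - F n) ≤ ε) →
      ∃ f : ℝ → ℝ, Regulated a b f ∧
        Tendsto (fun k => regNorm a b (F k - f)) atTop (𝓝 0)) := by
  refine ⟨fun f g hf hg => ⟨reg_add hf hg, reg_mul hf hg⟩, ?_, ?_⟩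
  · -- submultiplicativity
    intro f g hf hg
    refine regNorm_le (mul_nonneg (regNorm_nonneg a b f) (regNorm_nonneg a b g)) fun t ht => ?_
    rw [rl_mul hf hg ⟨ht.1.le, ht.2⟩, ll_mul hf hg ⟨ht.1, ht.2.le⟩, max_le_iff]
    have hfr := (le_max_left _ _).trans (le_regNorm hf ht)
    have hfl := (le_max_right _ _).trans (le_regNorm hf ht)
    have hgr := (le_max_left _ _).trans (le_regNorm hg ht)
    have hgl := (le_max_right _ _).trans (le_regNorm hg ht)
    constructor
    · rw [abs_mul]
      exact mul_le_mul hfr hgr (abs_nonneg _) ((abs_nonneg _).trans hfr)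
    · rw [abs_mul]
      exact mul_le_mul hfl hgl (abs_nonneg _) ((abs_nonneg _).trans hfl)
  · -- completeness
    intro F hF hC
    have hsub : ∀ m n, Regulated a b (F m - F n) := fun m n => reg_sub (hF m) (hF n)
    have key : ∀ m n, ∀ s ∈ Set.Ico a b,
        |limUnder (𝓝[Set.Ioo s b] s) (F m) - limUnder (𝓝[Set.Ioo s b] s) (F n)|
          ≤ regNorm a b (F m - F n) := by
      intro m n s hs
      have h := abs_rl_le_regNorm (hsub m n) hs
      rwa [rl_sub (hF m) (hF n) hs] at h
    have keyL : ∀ m n, ∀ s ∈ Set.Ioc a b,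
        |limUnder (𝓝[Set.Ioo a s] s) (F m) - limUnder (𝓝[Set.Ioo a s] s) (F n)|
          ≤ regNorm a b (F m - F n) := by
      intro m n s hs
      have h := abs_ll_le_regNorm (hsub m n) hs
      rwa [ll_sub (hF m) (hF n) hs] at h
    -- pointwise limits of the right-limit regularizations
    set f : ℝ → ℝ := fun s => limUnder atTop (fun k => limUnder (𝓝[Set.Ioo s b] s) (F k))
      with hfdef
    have hfs : ∀ s ∈ Set.Ico a b,
        Tendsto (fun k => limUnder (𝓝[Set.Ioo s b] s) (F k)) atTop (𝓝 (f s)) := by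
      intro s hs
      have hcau : CauchySeq (fun k => limUnder (𝓝[Set.Ioo s b] s) (F k)) := by
        rw [Metric.cauchySeq_iff]
        intro ε hε
        obtain ⟨N, hN⟩ := hC (ε / 2) (by linarith)
        refine ⟨N, fun m hm n hn => ?_⟩
        rw [Real.dist_eq]
        exact lt_of_le_of_lt ((key m n s hs).trans (hN m hm n hn)) (by linarith)
      obtain ⟨L, hL⟩ := cauchySeq_tendsto_of_complete hcau
      have : f s = L := hL.limUnder_eq
      rwa [this]
    set l : ℝ → ℝ := fun s => limUnder atTop (fun k => limUnder (𝓝[Set.Ioo a s] s) (F k))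
      with hldef
    have hls : ∀ s ∈ Set.Ioc a b,
        Tendsto (fun k => limUnder (𝓝[Set.Ioo a s] s) (F k)) atTop (𝓝 (l s)) := by
      intro s hs
      have hcau : CauchySeq (fun k => limUnder (𝓝[Set.Ioo a s] s) (F k)) := by
        rw [Metric.cauchySeq_iff]
        intro ε hε
        obtain ⟨N, hN⟩ := hC (ε / 2) (by linarith)
        refine ⟨N, fun m hm n hn => ?_⟩
        rw [Real.dist_eq]
        exact lt_of_le_of_lt ((keyL m n s hs).trans (hN m hm n hn)) (by linarith)
      obtain ⟨L, hL⟩ := cauchySeq_tendsto_of_complete hcau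
      have : l s = L := hL.limUnder_eq
      rwa [this]
    -- uniform closeness of the regularizations to the limits
    have unif : ∀ ε > (0:ℝ), ∃ N, ∀ k ≥ N,
        (∀ s ∈ Set.Ico a b, |limUnder (𝓝[Set.Ioo s b] s) (F k) - f s| ≤ ε) ∧
        (∀ s ∈ Set.Ioc a b, |limUnder (𝓝[Set.Ioo a s] s) (F k) - l s| ≤ ε) := by
      intro ε hε
      obtain ⟨N, hN⟩ := hC ε hε
      refine ⟨N, fun k hk => ⟨fun s hs => ?_, fun s hs => ?_⟩⟩
      · have h1 : Tendsto (fun m => |limUnder (𝓝[Set.Ioo s b] s) (F k)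
            - limUnder (𝓝[Set.Ioo s b] s) (F m)|) atTop
            (𝓝 |limUnder (𝓝[Set.Ioo s b] s) (F k) - f s|) :=
          (tendsto_const_nhds.sub (hfs s hs)).abs
        refine le_of_tendsto h1 ?_
        filter_upwards [eventually_ge_atTop N] with m hm
        exact (key k m s hs).trans (hN k hk m hm)
      · have h1 : Tendsto (fun m => |limUnder (𝓝[Set.Ioo a s] s) (F k)
            - limUnder (𝓝[Set.Ioo a s] s) (F m)|) atTop
            (𝓝 |limUnder (𝓝[Set.Ioo a s] s) (F k) - l s|) :=
          (tendsto_const_nhds.sub (hls s hs)).abs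
        refine le_of_tendsto h1 ?_
        filter_upwards [eventually_ge_atTop N] with m hm
        exact (keyL k m s hs).trans (hN k hk m hm)
    -- right limits of f
    have fright : ∀ t ∈ Set.Ico a b, Tendsto f (𝓝[Set.Ioo t b] t) (𝓝 (f t)) := by
      intro t ht
      haveI := neBotR ht.2
      rw [Metric.tendsto_nhds]
      intro ε hε
      obtain ⟨N, hN⟩ := unif (ε / 3) (by linarith)
      have h1 := (hN N le_rfl).1
      have h2 : ∀ᶠ x in 𝓝[Set.Ioo t b] t,
          dist (limUnder (𝓝[Set.Ioo x b] x) (F N)) (limUnder (𝓝[Set.Ioo t b] t) (F N))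
            < ε / 3 :=
        Metric.tendsto_nhds.mp (tendsto_rl_rl (hF N) ht) _ (by linarith)
      filter_upwards [h2, eventually_mem_nhdsWithin] with x hx hmem
      have hxI : x ∈ Set.Ico a b := ⟨ht.1.trans hmem.1.le, hmem.2⟩
      have d1 : dist (f x) (limUnder (𝓝[Set.Ioo x b] x) (F N)) ≤ ε / 3 := by
        rw [Real.dist_eq, abs_sub_comm]; exact h1 x hxI
      have d3 : dist (limUnder (𝓝[Set.Ioo t b] t) (F N)) (f t) ≤ ε / 3 := by
        rw [Real.dist_eq]; exact h1 t ht
      calc dist (f x) (f t)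
          ≤ dist (f x) (limUnder (𝓝[Set.Ioo x b] x) (F N))
            + dist (limUnder (𝓝[Set.Ioo x b] x) (F N)) (limUnder (𝓝[Set.Ioo t b] t) (F N))
            + dist (limUnder (𝓝[Set.Ioo t b] t) (F N)) (f t) := dist_triangle4 _ _ _ _
        _ < ε := by linarith
    -- left limits of f
    have fleft : ∀ t ∈ Set.Ioc a b, Tendsto f (𝓝[Set.Ioo a t] t) (𝓝 (l t)) := by
      intro t ht
      haveI := neBotL ht.1
      rw [Metric.tendsto_nhds]
      intro ε hε
      obtain ⟨N, hN⟩ := unif (ε / 4) (by linarith)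
      have h1 := (hN N le_rfl).1
      have hl1 := (hN N le_rfl).2 t ht
      have h2 : ∀ᶠ x in 𝓝[Set.Ioo a t] t,
          dist (limUnder (𝓝[Set.Ioo x b] x) (F N)) (limUnder (𝓝[Set.Ioo a t] t) (F N))
            < ε / 4 :=
        Metric.tendsto_nhds.mp (tendsto_ll_rl (hF N) ht) _ (by linarith)
      filter_upwards [h2, eventually_mem_nhdsWithin] with x hx hmem
      have hxI : x ∈ Set.Ico a b := ⟨hmem.1.le, hmem.2.trans_le ht.2⟩
      have d1 : dist (f x) (limUnder (𝓝[Set.Ioo x b] x) (F N)) ≤ ε / 4 := by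
        rw [Real.dist_eq, abs_sub_comm]; exact h1 x hxI
      have d3 : dist (limUnder (𝓝[Set.Ioo a t] t) (F N)) (l t) ≤ ε / 4 := by
        rw [Real.dist_eq]; exact hl1
      calc dist (f x) (l t)
          ≤ dist (f x) (limUnder (𝓝[Set.Ioo x b] x) (F N))
            + dist (limUnder (𝓝[Set.Ioo x b] x) (F N)) (limUnder (𝓝[Set.Ioo a t] t) (F N))
            + dist (limUnder (𝓝[Set.Ioo a t] t) (F N)) (l t) := dist_triangle4 _ _ _ _
        _ < ε := by linarith
    -- boundedness of f
    have fbdd : ∃ C, ∀ s ∈ Set.Ioo a b, |f s| ≤ C := by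
      obtain ⟨N, hN⟩ := unif 1 one_pos
      obtain ⟨C, hCb⟩ := (hF N).1
      refine ⟨C + 1, fun s hs => ?_⟩
      have h1 := (hN N le_rfl).1 s ⟨hs.1.le, hs.2⟩
      have h2 : |limUnder (𝓝[Set.Ioo s b] s) (F N)| ≤ C := abs_rl_le (hF N) hCb ⟨hs.1.le, hs.2⟩
      have h3 : |f s| ≤ |limUnder (𝓝[Set.Ioo s b] s) (F N)|
          + |limUnder (𝓝[Set.Ioo s b] s) (F N) - f s| := by
        calc |f s| = |limUnder (𝓝[Set.Ioo s b] s) (F N)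
            + (f s - limUnder (𝓝[Set.Ioo s b] s) (F N))| := by congr 1; ring
          _ ≤ |limUnder (𝓝[Set.Ioo s b] s) (F N)|
            + |f s - limUnder (𝓝[Set.Ioo s b] s) (F N)| := abs_add_le _ _
          _ = _ := by rw [abs_sub_comm]
      linarith
    have hfreg : Regulated a b f :=
      ⟨fbdd, fun t ht => ⟨f t, fright t ht⟩, fun t ht => ⟨l t, fleft t ht⟩⟩
    -- convergence in regNorm
    have conv : ∀ ε > (0:ℝ), ∃ N, ∀ k ≥ N, regNorm a b (F k - f) ≤ ε := by
      intro ε hε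
      obtain ⟨N, hN⟩ := unif ε hε
      refine ⟨N, fun k hk => regNorm_le hε.le fun t ht => ?_⟩
      haveI := neBotR ht.2
      haveI := neBotL ht.1
      have e1 : limUnder (𝓝[Set.Ioo t b] t) (F k - f)
          = limUnder (𝓝[Set.Ioo t b] t) (F k) - f t :=
        ((tendsto_rl (hF k) ⟨ht.1.le, ht.2⟩).sub (fright t ⟨ht.1.le, ht.2⟩)).limUnder_eq
      have e2 : limUnder (𝓝[Set.Ioo a t] t) (F k - f)
          = limUnder (𝓝[Set.Ioo a t] t) (F k) - l t :=
        ((tendsto_ll (hF k) ⟨ht.1, ht.2.le⟩).sub (fleft t ⟨ht.1, ht.2.le⟩)).limUnder_eq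
      rw [e1, e2, max_le_iff]
      exact ⟨(hN k hk).1 t ⟨ht.1.le, ht.2⟩, (hN k hk).2 t ⟨ht.1, ht.2.le⟩⟩
    refine ⟨f, hfreg, ?_⟩
    rw [Metric.tendsto_atTop]
    intro ε hε
    obtain ⟨N, hN⟩ := conv (ε / 2) (by linarith)
    refine ⟨N, fun k hk => ?_⟩
    rw [Real.dist_eq, sub_zero, abs_of_nonneg (regNorm_nonneg a b (F k - f))]
    exact lt_of_le_of_lt (hN k hk) (by linarith)
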